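/- Lemma (weak error bound). Let ε > 0 and suppose G is a (c,d)-regular (⌊2k/(1+2ε)+1⌋, 1/2+ε)-expander. Let x ∈ ℝ₊ⁿ and run the message-passing algorithm on y = Ax. Then there exists a constant C depending only on ε such that for some nonnegative integer t ≤ C·(1+log(k+1)), the estimate satisfies ‖x − x̂^{2t}‖₁ ≤ C·(1+log(k+1))·(cd)^{C·(1+log(k+1))}·‖x − x^(k)‖₁. -/

import Mathlib

open Finset

namespace MP

/-- Neighborhood of a left vertex `i ∈ X`: the measurements involving `i`. -/
def nhdX {n m : ℕ} (A : Fin m → Fin n → Bool) (i : Fin n) : Finset (Fin m) :=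
  Finset.univ.filter (fun j => A j i = true)

/-- Neighborhood of a right vertex `j ∈ Y`. -/
def nhdY {n m : ℕ} (A : Fin m → Fin n → Bool) (j : Fin m) : Finset (Fin n) :=
  Finset.univ.filter (fun i => A j i = true)

/-- `Γ(S)`, the set of neighbors of `S ⊆ X`. -/
def Gam {n m : ℕ} (A : Fin m → Fin n → Bool) (S : Finset (Fin n)) : Finset (Fin m) :=
  S.biUnion (nhdX A)

/-- The measurement vector `y = A x`. -/
noncomputable def yvec {n m : ℕ} (A : Fin m → Fin n → Bool) (x : Fin n → ℝ) (j : Fin m) : ℝ :=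
  ∑ i ∈ nhdY A j, x i

/-- Message from measurement `j` to variable `i`, given current variable messages `z`:
`y_j - ∑_{k ∈ N_y(j) \ {i}} z_k`. -/
noncomputable def msgY {n m : ℕ} (A : Fin m → Fin n → Bool) (x z : Fin n → ℝ)
    (j : Fin m) (i : Fin n) : ℝ :=
  yvec A x j - ∑ k ∈ (nhdY A j).erase i, z k

/-- The algorithm's estimate `x̂^s` (equal to the variable-to-check message `m_{i→j}^s`,
which does not depend on `j`).  At odd times it is the min of incoming check messages;
at even times `s+1` it is `max(0, max of incoming check messages)`. -/
noncomputable def xhat {n m : ℕ} (A : Fin m → Fin n → Bool) (x : Fin n → ℝ) :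
    ℕ → Fin n → ℝ
  | 0 => fun _ => 0
  | s + 1 => fun i =>
      if Even (s + 1) then
        max 0 (sSup ((fun l => msgY A x (xhat A x s) l i) '' (↑(nhdX A i) : Set (Fin m))))
      else
        sInf ((fun l => msgY A x (xhat A x s) l i) '' (↑(nhdX A i) : Set (Fin m)))

/-- The variable-to-check message `m_{i→j}^s` (independent of `j`). -/
noncomputable def mXY {n m : ℕ} (A : Fin m → Fin n → Bool) (x : Fin n → ℝ)
    (s : ℕ) (i : Fin n) (_j : Fin m) : ℝ := xhat A x s i

/-- The check-to-variable message `m_{j→i}^s`. -/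
noncomputable def mYX {n m : ℕ} (A : Fin m → Fin n → Bool) (x : Fin n → ℝ)
    (s : ℕ) (j : Fin m) (i : Fin n) : ℝ := msgY A x (xhat A x s) j i

/-- `G` is `(c,d)`-regular. -/
def IsRegular {n m : ℕ} (A : Fin m → Fin n → Bool) (c d : ℕ) : Prop :=
  (∀ i, (nhdX A i).card = c) ∧ (∀ j, (nhdY A j).card = d)

/-- `G` is a `(kk, α)`-expander (w.r.t. left degree `c`). -/
def IsExpander {n m : ℕ} (A : Fin m → Fin n → Bool) (c kk : ℕ) (α : ℝ) : Prop :=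
  ∀ S : Finset (Fin n), S.card ≤ kk → α * c * S.card ≤ ((Gam A S).card : ℝ)

/-- ℓ¹ norm on `ℝⁿ`. -/
noncomputable def l1 {n : ℕ} (u : Fin n → ℝ) : ℝ := ∑ i, |u i|

/-- `z` has at most `k` nonzero entries. -/
def IsKSparse {n : ℕ} (k : ℕ) (z : Fin n → ℝ) : Prop :=
  (Finset.univ.filter (fun i => z i ≠ 0)).card ≤ k

/-- `xk` is a best `k`-sparse nonnegative approximation of `x` in ℓ¹. -/
def BestKSparse {n : ℕ} (k : ℕ) (x xk : Fin n → ℝ) : Prop :=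
  (∀ i, 0 ≤ xk i) ∧ IsKSparse k xk ∧
    ∀ z : Fin n → ℝ, (∀ i, 0 ≤ z i) → IsKSparse k z →
      l1 (fun i => x i - xk i) ≤ l1 (fun i => x i - z i)


end MP

open MP Finset

namespace MPaux

variable {n m : ℕ} (A : Fin m → Fin n → Bool) (x : Fin n → ℝ)

lemma mem_nhdX {i : Fin n} {j : Fin m} : j ∈ nhdX A i ↔ A j i = true := by simp [nhdX]
lemma mem_nhdY {i : Fin n} {j : Fin m} : i ∈ nhdY A j ↔ A j i = true := by simp [nhdY]
lemma mem_nhdY_of_mem_nhdX {i : Fin n} {j : Fin m} (h : j ∈ nhdX A i) : i ∈ nhdY A j := by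
  rw [mem_nhdY]; rwa [mem_nhdX] at h

lemma msgY_eq (z : Fin n → ℝ) {i : Fin n} {j : Fin m} (h : i ∈ nhdY A j) :
    msgY A x z j i = x i + ∑ l ∈ (nhdY A j).erase i, (x l - z l) := by
  unfold msgY yvec
  rw [Finset.sum_sub_distrib, ← Finset.add_sum_erase _ x h]; ring

lemma xhat_odd (t : ℕ) (i : Fin n) :
    xhat A x (2*t+1) i
      = sInf ((fun l => msgY A x (xhat A x (2*t)) l i) '' (↑(nhdX A i) : Set (Fin m))) := by
  have he : ¬ Even (2*t+1) := by simp [Nat.even_add_one]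
  show xhat A x ((2*t)+1) i = _
  rw [xhat]; simp [he]

lemma xhat_even (t : ℕ) (i : Fin n) :
    xhat A x (2*t+2) i
      = max 0 (sSup ((fun l => msgY A x (xhat A x (2*t+1)) l i) '' (↑(nhdX A i) : Set (Fin m)))) := by
  have he : Even (2*t+1+1) := by simp [Nat.even_add_one]
  show xhat A x ((2*t+1)+1) i = _
  rw [xhat]; simp [he]

section withreg

variable {c d : ℕ}

lemma nhdX_nonempty (hreg : IsRegular A c d) (hc : 0 < c) (i : Fin n) : (nhdX A i).Nonempty := by
  rw [← Finset.card_pos, hreg.1 i]; exact hc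

lemma img_nonempty (hreg : IsRegular A c d) (hc : 0 < c) (z : Fin n → ℝ) (i : Fin n) :
    ((fun l => msgY A x z l i) '' (↑(nhdX A i) : Set (Fin m))).Nonempty :=
  ((nhdX_nonempty A hreg hc i).to_set).image _

lemma img_finite (z : Fin n → ℝ) (i : Fin n) :
    ((fun l => msgY A x z l i) '' (↑(nhdX A i) : Set (Fin m))).Finite :=
  ((nhdX A i).finite_toSet).image _

/-- Sandwich property. -/
lemma sandwich (hreg : IsRegular A c d) (hc : 0 < c) (hx : ∀ i, 0 ≤ x i) : ∀ t : ℕ,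
    (∀ i, 0 ≤ xhat A x (2*t) i ∧ xhat A x (2*t) i ≤ x i) ∧
    (∀ i, x i ≤ xhat A x (2*t+1) i) := by
  intro t
  induction t with
  | zero =>
    constructor
    · intro i; exact ⟨le_refl _, hx i⟩
    · intro i
      rw [xhat_odd]
      apply le_csInf (img_nonempty A x hreg hc _ i)
      rintro b ⟨j, hj, rfl⟩
      rw [Finset.mem_coe] at hj
      simp only []
      rw [msgY_eq A x _ (mem_nhdY_of_mem_nhdX A hj)]
      have : (0:ℝ) ≤ ∑ l ∈ (nhdY A j).erase i, (x l - xhat A x (2*0) l) := by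
        apply Finset.sum_nonneg; intro l _
        have : xhat A x (2*0) l = 0 := rfl
        rw [this]; simpa using hx l
      linarith
  | succ t ih =>
    have hodd := ih.2
    have heven : ∀ i, 0 ≤ xhat A x (2*(t+1)) i ∧ xhat A x (2*(t+1)) i ≤ x i := by
      intro i
      have h2 : 2*(t+1) = 2*t+2 := by ring
      rw [h2, xhat_even]
      constructor
      · exact le_max_left _ _
      · apply max_le (hx i)
        apply csSup_le (img_nonempty A x hreg hc _ i)
        rintro b ⟨j, hj, rfl⟩
        rw [Finset.mem_coe] at hj
        simp only []
        rw [msgY_eq A x _ (mem_nhdY_of_mem_nhdX A hj)]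
        have : ∑ l ∈ (nhdY A j).erase i, (x l - xhat A x (2*t+1) l) ≤ 0 := by
          apply Finset.sum_nonpos; intro l _
          have := hodd l; linarith
        linarith
    refine ⟨heven, ?_⟩
    intro i
    rw [show 2*(t+1)+1 = 2*(t+1)+1 from rfl, xhat_odd]
    apply le_csInf (img_nonempty A x hreg hc _ i)
    rintro b ⟨j, hj, rfl⟩
    rw [Finset.mem_coe] at hj
    simp only []
    rw [msgY_eq A x _ (mem_nhdY_of_mem_nhdX A hj)]
    have : (0:ℝ) ≤ ∑ l ∈ (nhdY A j).erase i, (x l - xhat A x (2*(t+1)) l) := by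
      apply Finset.sum_nonneg; intro l _
      have := (heven l).2; linarith
    linarith

/-- Error bound at odd steps: for every check `j'` of `k`. -/
lemma err_odd (t : ℕ) {kv : Fin n} {j' : Fin m} (hj' : j' ∈ nhdX A kv) :
    xhat A x (2*t+1) kv - x kv ≤ ∑ l ∈ (nhdY A j').erase kv, (x l - xhat A x (2*t) l) := by
  have h := xhat_odd A x t kv
  have hle : xhat A x (2*t+1) kv ≤ msgY A x (xhat A x (2*t)) j' kv := by
    rw [h]
    exact csInf_le ((img_finite A x _ kv).bddBelow) ⟨j', by simpa using hj', rfl⟩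
  rw [msgY_eq A x _ (mem_nhdY_of_mem_nhdX A hj')] at hle
  linarith

/-- Error bound at even steps: for every check `j` of `i`. -/
lemma err_even (t : ℕ) {i : Fin n} {j : Fin m} (hj : j ∈ nhdX A i) :
    x i - xhat A x (2*(t+1)) i ≤ ∑ kv ∈ (nhdY A j).erase i, (xhat A x (2*t+1) kv - x kv) := by
  have h2 : 2*(t+1) = 2*t+2 := by ring
  have hge : msgY A x (xhat A x (2*t+1)) j i ≤ xhat A x (2*(t+1)) i := by
    rw [h2, xhat_even]
    refine le_trans (le_csSup ((img_finite A x _ i).bddAbove) ⟨j, by simpa using hj, rfl⟩)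
      (le_max_right _ _)
  rw [msgY_eq A x _ (mem_nhdY_of_mem_nhdX A hj)] at hge
  have : ∑ kv ∈ (nhdY A j).erase i, (xhat A x (2*t+1) kv - x kv)
       = - ∑ l ∈ (nhdY A j).erase i, (x l - xhat A x (2*t+1) l) := by
    rw [← Finset.sum_neg_distrib]; apply Finset.sum_congr rfl; intros; ring
  rw [this]; linarith


/-- threshold at stage t -/
noncomputable def tau (d : ℕ) (r : ℝ) (t : ℕ) : ℝ := ((d:ℝ)-1)^(2*t) * r

lemma tau_succ (d : ℕ) (r : ℝ) (t : ℕ) : tau d r (t+1) = ((d:ℝ)-1) * (((d:ℝ)-1) * tau d r t) := by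
  unfold tau
  rw [show 2*(t+1) = 2*t+2 by ring, pow_add]
  ring

/-- bad sets at even times -/
noncomputable def Fset (A : Fin m → Fin n → Bool) (x : Fin n → ℝ) (d : ℕ) (r : ℝ) (t : ℕ) :
    Finset (Fin n) :=
  Finset.univ.filter (fun i => tau d r t < x i - xhat A x (2*t) i)

/-- bad sets at odd times -/
noncomputable def Tset (A : Fin m → Fin n → Bool) (x : Fin n → ℝ) (d : ℕ) (r : ℝ) (t : ℕ) :
    Finset (Fin n) :=
  Finset.univ.filter (fun kv => ((d:ℝ)-1) * tau d r t < xhat A x (2*t+1) kv - x kv)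

lemma card_erase_nhdY (hreg : IsRegular A c d) {i : Fin n} {j : Fin m} (h : i ∈ nhdY A j) :
    ((nhdY A j).erase i).card = d - 1 := by
  rw [Finset.card_erase_of_mem h, hreg.2 j]

/-- witness lemma C2: every check of an element of `Tset t` meets `Fset t` elsewhere -/
lemma witness_T (hreg : IsRegular A c d) (hd : 0 < d) {r : ℝ} {t : ℕ} {kv : Fin n}
    (hkv : kv ∈ Tset A x d r t) {j' : Fin m} (hj' : j' ∈ nhdX A kv) :
    ∃ l ∈ (nhdY A j').erase kv, l ∈ Fset A x d r t := by
  by_contra hcon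
  push_neg at hcon
  have hbound : ∀ l ∈ (nhdY A j').erase kv, x l - xhat A x (2*t) l ≤ tau d r t := by
    intro l hl
    have := hcon l hl
    simp only [Fset, Finset.mem_filter, Finset.mem_univ, true_and] at this
    linarith [this]
  have hsum := Finset.sum_le_card_nsmul _ _ _ hbound
  rw [card_erase_nhdY A hreg (mem_nhdY_of_mem_nhdX A hj')] at hsum
  have hcast : ((d-1 : ℕ) : ℝ) = (d:ℝ) - 1 := by
    have : (1:ℕ) ≤ d := hd
    push_cast [this]; ring
  rw [nsmul_eq_mul, hcast] at hsum
  have herr := err_odd A x t hj'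
  simp only [Tset, Finset.mem_filter, Finset.mem_univ, true_and] at hkv
  linarith

/-- witness lemma C1: every check of an element of `Fset (t+1)` meets `Tset t` elsewhere -/
lemma witness_F (hreg : IsRegular A c d) (hd : 0 < d) {r : ℝ} {t : ℕ} {i : Fin n}
    (hi : i ∈ Fset A x d r (t+1)) {j : Fin m} (hj : j ∈ nhdX A i) :
    ∃ kv ∈ (nhdY A j).erase i, kv ∈ Tset A x d r t := by
  by_contra hcon
  push_neg at hcon
  have hbound : ∀ kv ∈ (nhdY A j).erase i,
      xhat A x (2*t+1) kv - x kv ≤ ((d:ℝ)-1) * tau d r t := by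
    intro kv hkv
    have := hcon kv hkv
    simp only [Tset, Finset.mem_filter, Finset.mem_univ, true_and] at this
    linarith [this]
  have hsum := Finset.sum_le_card_nsmul _ _ _ hbound
  rw [card_erase_nhdY A hreg (mem_nhdY_of_mem_nhdX A hj)] at hsum
  have hcast : ((d-1 : ℕ) : ℝ) = (d:ℝ) - 1 := by
    have : (1:ℕ) ≤ d := hd
    push_cast [this]; ring
  rw [nsmul_eq_mul, hcast] at hsum
  have herr := err_even A x t hj
  simp only [Fset, Finset.mem_filter, Finset.mem_univ, true_and] at hi
  rw [tau_succ] at hi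
  linarith


/-- the arena: F₀ together with all variables whose whole neighborhood lies in Γ(F₀) -/
def Warena (A : Fin m → Fin n → Bool) (F0 : Finset (Fin n)) : Finset (Fin n) :=
  F0 ∪ Finset.univ.filter (fun i => nhdX A i ⊆ Gam A F0)

lemma Gam_mono {S S' : Finset (Fin n)} (h : S ⊆ S') : Gam A S ⊆ Gam A S' := by
  apply Finset.biUnion_subset_biUnion_of_subset_left _ h

lemma Gam_Warena (F0 : Finset (Fin n)) : Gam A (Warena A F0) = Gam A F0 := by
  apply Finset.Subset.antisymm
  · intro j hj
    rw [Gam, Finset.mem_biUnion] at hj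
    obtain ⟨i, hi, hij⟩ := hj
    rw [Warena, Finset.mem_union] at hi
    rcases hi with hi | hi
    · exact Finset.mem_biUnion.2 ⟨i, hi, hij⟩
    · rw [Finset.mem_filter] at hi
      exact hi.2 hij
  · exact Gam_mono A (Finset.subset_union_left)

lemma mem_Warena_of_nhd {F0 : Finset (Fin n)} {i : Fin n} (h : nhdX A i ⊆ Gam A F0) :
    i ∈ Warena A F0 := by
  rw [Warena, Finset.mem_union]
  right
  rw [Finset.mem_filter]
  exact ⟨Finset.mem_univ _, h⟩

/-- membership of F/T sets in the arena -/
lemma FT_subset_Warena (hreg : IsRegular A c d) (hd : 0 < d) {r : ℝ} :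
    ∀ t : ℕ, Fset A x d r t ⊆ Warena A (Fset A x d r 0) ∧
             Tset A x d r t ⊆ Warena A (Fset A x d r 0) := by
  intro t
  induction t with
  | zero =>
    constructor
    · exact Finset.subset_union_left
    · intro kv hkv
      apply mem_Warena_of_nhd
      intro j' hj'
      obtain ⟨l, hl, hlF⟩ := witness_T A x hreg hd hkv hj'
      have hlW : l ∈ Fset A x d r 0 := hlF
      rw [Gam, Finset.mem_biUnion]
      refine ⟨l, hlW, ?_⟩
      rw [mem_nhdX]
      have := Finset.mem_of_mem_erase hl
      rwa [mem_nhdY] at this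
  | succ t ih =>
    have hF : Fset A x d r (t+1) ⊆ Warena A (Fset A x d r 0) := by
      intro i hi
      apply mem_Warena_of_nhd
      intro j hj
      obtain ⟨kv, hkv, hkvT⟩ := witness_F A x hreg hd hi hj
      have hkvW : kv ∈ Warena A (Fset A x d r 0) := ih.2 hkvT
      rw [← Gam_Warena A (Fset A x d r 0), Gam, Finset.mem_biUnion]
      refine ⟨kv, hkvW, ?_⟩
      rw [mem_nhdX]
      have := Finset.mem_of_mem_erase hkv
      rwa [mem_nhdY] at this
    refine ⟨hF, ?_⟩
    intro kv hkv
    apply mem_Warena_of_nhd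
    intro j' hj'
    obtain ⟨l, hl, hlF⟩ := witness_T A x hreg hd hkv hj'
    have hlW : l ∈ Warena A (Fset A x d r 0) := hF hlF
    rw [← Gam_Warena A (Fset A x d r 0), Gam, Finset.mem_biUnion]
    refine ⟨l, hlW, ?_⟩
    rw [mem_nhdX]
    have := Finset.mem_of_mem_erase hl
    rwa [mem_nhdY] at this

lemma card_Gam_le (hreg : IsRegular A c d) (S : Finset (Fin n)) :
    (Gam A S).card ≤ c * S.card := by
  calc (Gam A S).card ≤ ∑ i ∈ S, (nhdX A i).card := Finset.card_biUnion_le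
  _ = ∑ i ∈ S, c := by apply Finset.sum_congr rfl; intro i _; rw [hreg.1 i]
  _ = c * S.card := by rw [Finset.sum_const, smul_eq_mul, mul_comm]


lemma card_Warena_le {kk k : ℕ} {ε : ℝ} (hexp : IsExpander A c kk (1/2+ε)) (hc : 0 < c)
    (F0 : Finset (Fin n)) (hreg : IsRegular A c d) (hF0 : F0.card ≤ k) (hkk : k ≤ kk)
    (hkgt : (k:ℝ) < (1/2+ε) * kk) : (Warena A F0).card ≤ kk := by
  by_contra hlt
  push_neg at hlt
  have hsub0 : F0 ⊆ Warena A F0 := Finset.subset_union_left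
  have hle : (kk - F0.card) + F0.card ≤ (Warena A F0).card := by
    have h1 : F0.card ≤ kk := le_trans hF0 hkk
    omega
  obtain ⟨W', hsub1, hsub2, hcard⟩ := Finset.exists_subsuperset_card_eq hsub0 (Nat.le_add_left _ _) hle
  have hWcard : W'.card = kk := by
    have h1 : F0.card ≤ kk := le_trans hF0 hkk
    omega
  have hGam : (Gam A W').card ≤ c * k := by
    calc (Gam A W').card ≤ (Gam A (Warena A F0)).card :=
          Finset.card_le_card (Gam_mono A hsub2)
    _ = (Gam A F0).card := by rw [Gam_Warena]
    _ ≤ c * F0.card := card_Gam_le A hreg F0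
    _ ≤ c * k := Nat.mul_le_mul_left c hF0
  have hexp' := hexp W' (le_of_eq hWcard)
  rw [hWcard] at hexp'
  have h1 : ((Gam A W').card : ℝ) ≤ (c:ℝ) * k := by exact_mod_cast hGam
  have hcpos : (0:ℝ) < c := by exact_mod_cast hc
  nlinarith [hexp', h1, hkgt]

/-- owners of unique checks within V -/
def Ow (A : Fin m → Fin n → Bool) (V : Finset (Fin n)) : Finset (Fin n) :=
  V.filter (fun i => ∃ j ∈ nhdX A i, nhdY A j ∩ V = {i})

lemma Ow_subset (V : Finset (Fin n)) : Ow A V ⊆ V := Finset.filter_subset _ _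

lemma edge_count (hreg : IsRegular A c d) (V : Finset (Fin n)) :
    ∑ j ∈ Gam A V, ((nhdY A j ∩ V).card : ℝ) = (c:ℝ) * V.card := by
  have hfil : ∀ j : Fin m, nhdY A j ∩ V = V.filter (fun i => A j i = true) := by
    intro j; ext i; simp [mem_nhdY, and_comm]
  have : ∀ j ∈ Gam A V, ((nhdY A j ∩ V).card : ℝ)
      = ∑ i ∈ V, (if A j i = true then (1:ℝ) else 0) := by
    intro j _
    rw [hfil j, ← Finset.sum_boole]
  rw [Finset.sum_congr rfl this, Finset.sum_comm]
  have hinner : ∀ i ∈ V, ∑ j ∈ Gam A V, (if A j i = true then (1:ℝ) else 0) = (c:ℝ) := by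
    intro i hi
    rw [Finset.sum_boole]
    have : (Gam A V).filter (fun j => A j i = true) = nhdX A i := by
      ext j
      simp only [Finset.mem_filter, mem_nhdX]
      constructor
      · rintro ⟨_, h⟩; exact h
      · intro h
        refine ⟨?_, h⟩
        rw [Gam, Finset.mem_biUnion]
        exact ⟨i, hi, by rwa [mem_nhdX]⟩
    rw [this, hreg.1 i]
  rw [Finset.sum_congr rfl hinner, Finset.sum_const, nsmul_eq_mul, mul_comm]

/-- counting lemma: the owners of unique checks are at least a 2ε fraction -/
lemma counting {kk : ℕ} {ε : ℝ} (hreg : IsRegular A c d) (hc : 0 < c)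
    (hexp : IsExpander A c kk (1/2+ε)) (V : Finset (Fin n)) (hV : V.card ≤ kk) :
    2*ε*(V.card:ℝ) ≤ ((Ow A V).card : ℝ) := by
  set U : Finset (Fin m) := (Gam A V).filter (fun j => (nhdY A j ∩ V).card = 1) with hU
  -- each check in Gam V has at least one neighbor in V
  have hpos : ∀ j ∈ Gam A V, 1 ≤ (nhdY A j ∩ V).card := by
    intro j hj
    rw [Gam, Finset.mem_biUnion] at hj
    obtain ⟨i, hi, hij⟩ := hj
    have : i ∈ nhdY A j ∩ V := Finset.mem_inter.2 ⟨mem_nhdY_of_mem_nhdX A hij, hi⟩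
    exact Finset.card_pos.2 ⟨i, this⟩
  -- lower bound each degree
  have hdeg : ∀ j ∈ Gam A V,
      (2:ℝ) - (if (nhdY A j ∩ V).card = 1 then (1:ℝ) else 0) ≤ ((nhdY A j ∩ V).card : ℝ) := by
    intro j hj
    by_cases h1 : (nhdY A j ∩ V).card = 1
    · simp [h1]
      norm_num
    · have : 2 ≤ (nhdY A j ∩ V).card := by
        have := hpos j hj; omega
      simp only [h1, if_false, sub_zero]
      exact_mod_cast this
  have hsum : ∑ j ∈ Gam A V, ((2:ℝ) - (if (nhdY A j ∩ V).card = 1 then (1:ℝ) else 0))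
      ≤ (c:ℝ) * V.card := by
    rw [← edge_count A hreg V]
    exact Finset.sum_le_sum hdeg
  have hUcard : ∑ j ∈ Gam A V, (if (nhdY A j ∩ V).card = 1 then (1:ℝ) else 0) = (U.card : ℝ) := by
    rw [hU, Finset.sum_boole]
  have hsum2 : 2*((Gam A V).card : ℝ) - (U.card:ℝ) ≤ (c:ℝ) * V.card := by
    rw [← hUcard]
    rw [Finset.sum_sub_distrib] at hsum
    rw [Finset.sum_const, nsmul_eq_mul] at hsum
    linarith [hsum]
  -- U is covered by neighborhoods of owners
  have hcover : U ⊆ (Ow A V).biUnion (nhdX A) := by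
    intro j hj
    rw [hU, Finset.mem_filter] at hj
    obtain ⟨i, hi⟩ := Finset.card_eq_one.1 hj.2
    have himem : i ∈ nhdY A j ∩ V := by rw [hi]; exact Finset.mem_singleton_self i
    rw [Finset.mem_inter] at himem
    have hjx : j ∈ nhdX A i := by rw [mem_nhdX]; have := himem.1; rwa [mem_nhdY] at this
    have hiOw : i ∈ Ow A V := by
      rw [Ow, Finset.mem_filter]
      exact ⟨himem.2, j, hjx, hi⟩
    rw [Finset.mem_biUnion]
    exact ⟨i, hiOw, hjx⟩
  have hUle : (U.card : ℝ) ≤ (c:ℝ) * ((Ow A V).card) := by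
    have : U.card ≤ c * (Ow A V).card := by
      calc U.card ≤ ((Ow A V).biUnion (nhdX A)).card := Finset.card_le_card hcover
      _ ≤ ∑ i ∈ Ow A V, (nhdX A i).card := Finset.card_biUnion_le
      _ = c * (Ow A V).card := by
          rw [Finset.sum_congr rfl (fun i _ => hreg.1 i), Finset.sum_const, smul_eq_mul, mul_comm]
    exact_mod_cast this
  have hexp' := hexp V hV
  have hcpos : (0:ℝ) < c := by exact_mod_cast hc
  have hkey : (c:ℝ) * (2*ε*(V.card:ℝ)) ≤ (c:ℝ) * ((Ow A V).card : ℝ) := by nlinarith [hexp', hsum2, hUle]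
  exact le_of_mul_le_mul_left hkey hcpos


/-- peeling sequence -/
def peel (A : Fin m → Fin n → Bool) (W : Finset (Fin n)) : ℕ → Finset (Fin n)
  | 0 => W
  | r+1 => peel A W r \ Ow A (peel A W r)

lemma peel_subset (W : Finset (Fin n)) : ∀ r, peel A W r ⊆ W := by
  intro r
  induction r with
  | zero => exact Finset.Subset.refl _
  | succ r ih => exact Finset.Subset.trans (Finset.sdiff_subset) ih

lemma peel_card_decay {kk : ℕ} {ε : ℝ} (hreg : IsRegular A c d) (hc : 0 < c)
    (hexp : IsExpander A c kk (1/2+ε)) (hε : 0 ≤ 1 - 2*ε)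
    (W : Finset (Fin n)) (hW : W.card ≤ kk) :
    ∀ r, ((peel A W r).card : ℝ) ≤ (1-2*ε)^r * W.card := by
  intro r
  induction r with
  | zero => simp [peel]
  | succ r ih =>
    have hVW : peel A W r ⊆ W := peel_subset A W r
    have hVkk : (peel A W r).card ≤ kk := le_trans (Finset.card_le_card hVW) hW
    have hcount := counting A hreg hc hexp (peel A W r) hVkk
    have hOw : Ow A (peel A W r) ⊆ peel A W r := Ow_subset A _
    have hcard : (peel A W (r+1)).card = (peel A W r).card - (Ow A (peel A W r)).card := by
      show ((peel A W r) \ Ow A (peel A W r)).card = _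
      rw [Finset.card_sdiff_of_subset hOw]
    have hOwle : (Ow A (peel A W r)).card ≤ (peel A W r).card := Finset.card_le_card hOw
    have hcastR : ((peel A W (r+1)).card : ℝ)
        = ((peel A W r).card : ℝ) - ((Ow A (peel A W r)).card : ℝ) := by
      rw [hcard]
      push_cast [hOwle]
      ring
    have step : ((peel A W (r+1)).card : ℝ) ≤ (1-2*ε) * ((peel A W r).card : ℝ) := by
      rw [hcastR]; linarith
    calc ((peel A W (r+1)).card : ℝ) ≤ (1-2*ε) * ((peel A W r).card : ℝ) := step
    _ ≤ (1-2*ε) * ((1-2*ε)^r * W.card) := by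
        apply mul_le_mul_of_nonneg_left ih hε
    _ = (1-2*ε)^(r+1) * W.card := by ring

/-- exclusion: bad sets stay inside the peeled sets -/
lemma exclusion (hreg : IsRegular A c d) (hd : 0 < d) {r : ℝ} :
    ∀ s : ℕ, (∀ t, s ≤ t → Fset A x d r t ⊆ peel A (Warena A (Fset A x d r 0)) s) ∧
             (∀ t, s ≤ t → Tset A x d r t ⊆ peel A (Warena A (Fset A x d r 0)) s) := by
  set W := Warena A (Fset A x d r 0) with hWdef
  intro s
  induction s with
  | zero =>
    constructor
    · intro t _; exact (FT_subset_Warena A x hreg hd t).1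
    · intro t _; exact (FT_subset_Warena A x hreg hd t).2
  | succ s ih =>
    constructor
    · -- F part: t ≥ s+1
      intro t hts i hi
      obtain ⟨t', rfl⟩ : ∃ t', t = t' + 1 := ⟨t - 1, by omega⟩
      have hiP : i ∈ peel A W s := ih.1 _ (by omega) hi
      show i ∈ peel A W s \ Ow A (peel A W s)
      rw [Finset.mem_sdiff]
      refine ⟨hiP, ?_⟩
      intro hiOw
      rw [Ow, Finset.mem_filter] at hiOw
      obtain ⟨_, j, hj, huniq⟩ := hiOw
      obtain ⟨kv, hkv, hkvT⟩ := witness_F A x hreg hd hi hj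
      have hkvP : kv ∈ peel A W s := ih.2 t' (by omega) hkvT
      have : kv ∈ nhdY A j ∩ peel A W s :=
        Finset.mem_inter.2 ⟨Finset.mem_of_mem_erase hkv, hkvP⟩
      rw [huniq, Finset.mem_singleton] at this
      exact (Finset.ne_of_mem_erase hkv) this
    · -- T part: t ≥ s+1
      intro t hts kv hkv
      have hkvP : kv ∈ peel A W s := ih.2 _ (by omega) hkv
      show kv ∈ peel A W s \ Ow A (peel A W s)
      rw [Finset.mem_sdiff]
      refine ⟨hkvP, ?_⟩
      intro hOw
      rw [Ow, Finset.mem_filter] at hOw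
      obtain ⟨_, j', hj', huniq⟩ := hOw
      obtain ⟨l, hl, hlF⟩ := witness_T A x hreg hd hkv hj'
      have hlP : l ∈ peel A W s := ih.1 t (by omega) hlF
      have : l ∈ nhdY A j' ∩ peel A W s :=
        Finset.mem_inter.2 ⟨Finset.mem_of_mem_erase hl, hlP⟩
      rw [huniq, Finset.mem_singleton] at this
      exact (Finset.ne_of_mem_erase hl) this

end withreg


lemma pow_s0_le_half (ε' : ℝ) (h1 : 0 < ε') (h2 : ε' ≤ 1/4) :
    (1-2*ε')^(Nat.ceil (1/(2*ε'))) ≤ 1/2 := by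
  set s0 := Nat.ceil (1/(2*ε')) with hs0
  have hb0 : (0:ℝ) ≤ 1-2*ε' := by linarith
  have hbe : 1-2*ε' ≤ Real.exp (-(2*ε')) := by
    have := Real.add_one_le_exp (-(2*ε')); linarith
  have h3 : (1-2*ε')^s0 ≤ Real.exp (-(2*ε'))^s0 := pow_le_pow_left₀ hb0 hbe _
  have h3' : Real.exp (-(2*ε'))^s0 = Real.exp (s0 * (-(2*ε'))) := by
    rw [← Real.exp_nat_mul]
  have h4 : Real.exp ((s0:ℝ) * (-(2*ε'))) ≤ Real.exp (-1) := by
    apply Real.exp_le_exp.2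
    have hle : (1:ℝ)/(2*ε') ≤ (s0:ℝ) := Nat.le_ceil _
    have h2e : (0:ℝ) < 2*ε' := by linarith
    have h6 : (1:ℝ) ≤ (s0:ℝ)*(2*ε') := by
      have := (div_le_iff₀ h2e).1 hle
      linarith
    nlinarith
  have h5 : Real.exp (-1) ≤ 1/2 := by
    rw [Real.exp_neg]
    have he2 : (2:ℝ) ≤ Real.exp 1 := by have := Real.add_one_le_exp (1:ℝ); linarith
    have : (Real.exp 1)⁻¹ ≤ (2:ℝ)⁻¹ := by
      apply inv_anti₀ (by norm_num) he2
    linarith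
  calc (1-2*ε')^s0 ≤ Real.exp (-(2*ε'))^s0 := h3
  _ = Real.exp ((s0:ℝ) * (-(2*ε'))) := h3'
  _ ≤ Real.exp (-1) := h4
  _ ≤ 1/2 := h5

lemma q_bound (k kk : ℕ) (hkk1 : 1 ≤ kk) (hkk2 : kk ≤ 2*k+1) :
    ((Nat.log 2 kk + 1 : ℕ) : ℝ) ≤ 2*(1 + Real.log ((k:ℝ)+1)) := by
  set Lg := Nat.log 2 kk with hLg
  have h1 : (2:ℝ)^(Lg:ℕ) ≤ (kk:ℝ) := by
    exact_mod_cast Nat.pow_log_le_self 2 (by omega)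
  have h2 : (kk:ℝ) ≤ 2*((k:ℝ)+1) := by
    have : kk ≤ 2*(k+1) := by omega
    push_cast
    exact_mod_cast this
  have hpos : (0:ℝ) < 2*((k:ℝ)+1) := by positivity
  have h3 : Real.log ((2:ℝ)^(Lg:ℕ)) ≤ Real.log (2*((k:ℝ)+1)) :=
    Real.log_le_log (by positivity) (le_trans h1 h2)
  rw [Real.log_pow] at h3
  rw [Real.log_mul (by norm_num) (by positivity)] at h3
  have hlog2 : (0.6931471803:ℝ) < Real.log 2 := Real.log_two_gt_d9
  have hlogk : 0 ≤ Real.log ((k:ℝ)+1) := Real.log_nonneg (by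
    have : (0:ℝ) ≤ (k:ℝ) := Nat.cast_nonneg k
    linarith)
  have hlg : (Lg:ℝ) * Real.log 2 ≤ Real.log 2 + Real.log ((k:ℝ)+1) := h3
  have hLgle : (Lg:ℝ) ≤ 1 + 2*Real.log ((k:ℝ)+1) := by
    nlinarith [hlg, hlog2, hlogk, Nat.cast_nonneg (α := ℝ) Lg]
  push_cast
  linarith


lemma final_numeric {c d k t : ℕ} (hc : 1 ≤ c) (hd : 1 ≤ d) (ht1 : 1 ≤ t)
    (L C : ℝ) (hL : 1 ≤ L) (hLk : Real.log ((k:ℝ)+1) ≤ L)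
    (hC8 : 8 ≤ C) (hCt : 2*(t:ℝ) + 4*L ≤ C*L) :
    (k:ℝ) * ((d:ℝ)-1)^(2*t) + 1 ≤ C*L * ((c:ℝ)*(d:ℝ))^(C*L) := by
  have hc1 : (1:ℝ) ≤ (c:ℝ) := by exact_mod_cast hc
  have hd1 : (1:ℝ) ≤ (d:ℝ) := by exact_mod_cast hd
  have hcd1 : (1:ℝ) ≤ (c:ℝ)*(d:ℝ) := one_le_mul_of_one_le_of_one_le hc1 hd1
  have hCL1 : (1:ℝ) ≤ C*L := by nlinarith
  have hrpow1 : (1:ℝ) ≤ ((c:ℝ)*(d:ℝ))^(C*L) :=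
    Real.one_le_rpow hcd1 (by linarith)
  by_cases hdone : d = 1
  · subst hdone
    have : ((1:ℕ):ℝ) - 1 = 0 := by norm_num
    rw [this, zero_pow (by omega : 2*t ≠ 0)]
    nlinarith
  · have hd2 : 2 ≤ d := by omega
    have hd2R : (2:ℝ) ≤ (d:ℝ) := by exact_mod_cast hd2
    have hcd2 : (2:ℝ) ≤ (c:ℝ)*(d:ℝ) := by nlinarith
    have hpow : ((d:ℝ)-1)^(2*t) ≤ ((c:ℝ)*(d:ℝ))^(2*t) := by
      apply pow_le_pow_left₀ (by linarith) (by nlinarith)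
    set X : ℝ := ((c:ℝ)*(d:ℝ))^(2*t) with hX
    have hX1 : (1:ℝ) ≤ X := by rw [hX]; exact one_le_pow₀ hcd1
    have hlog2 : (0.6931471803:ℝ) < Real.log 2 := Real.log_two_gt_d9
    have hlogk : 0 ≤ Real.log ((k:ℝ)+1) := Real.log_nonneg (by have : (0:ℝ) ≤ (k:ℝ) := Nat.cast_nonneg k; linarith)
    -- (cd)^(C*L) ≥ X * 2(k+1)
    have key : X * (2*((k:ℝ)+1)) ≤ ((c:ℝ)*(d:ℝ))^(C*L) := by
      have h1 : ((c:ℝ)*(d:ℝ))^((2*t:ℝ) + 4*L) ≤ ((c:ℝ)*(d:ℝ))^(C*L) :=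
        Real.rpow_le_rpow_of_exponent_le hcd1 hCt
      have h2 : ((c:ℝ)*(d:ℝ))^((2*t:ℝ) + 4*L)
          = ((c:ℝ)*(d:ℝ))^((2*t:ℝ)) * ((c:ℝ)*(d:ℝ))^(4*L) :=
        Real.rpow_add (by linarith) _ _
      have h3 : ((c:ℝ)*(d:ℝ))^((2*t:ℝ)) = X := by
        rw [hX]
        rw [show ((2*t:ℝ)) = ((2*t : ℕ) : ℝ) by push_cast; ring]
        exact Real.rpow_natCast _ _
      have h4 : (2:ℝ)^(4*L) ≤ ((c:ℝ)*(d:ℝ))^(4*L) :=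
        Real.rpow_le_rpow (by norm_num) hcd2 (by linarith)
      have h5 : 2*((k:ℝ)+1) ≤ (2:ℝ)^(4*L) := by
        have e1 : (2:ℝ)^(4*L) = Real.exp (Real.log 2 * (4*L)) :=
          Real.rpow_def_of_pos (by norm_num) _
        have e2 : 2*((k:ℝ)+1) = Real.exp (Real.log 2 + Real.log ((k:ℝ)+1)) := by
          rw [Real.exp_add, Real.exp_log (by norm_num), Real.exp_log (by positivity)]
        rw [e1, e2]
        apply Real.exp_le_exp.2
        nlinarith
      calc X * (2*((k:ℝ)+1)) ≤ X * (2:ℝ)^(4*L) := by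
            apply mul_le_mul_of_nonneg_left h5 (by linarith)
      _ ≤ X * ((c:ℝ)*(d:ℝ))^(4*L) := by
            apply mul_le_mul_of_nonneg_left h4 (by linarith)
      _ = ((c:ℝ)*(d:ℝ))^((2*t:ℝ) + 4*L) := by rw [h2, h3]
      _ ≤ ((c:ℝ)*(d:ℝ))^(C*L) := h1
    have hk0 : (0:ℝ) ≤ (k:ℝ) := by exact_mod_cast Nat.zero_le k
    have step1 : (k:ℝ) * ((d:ℝ)-1)^(2*t) + 1 ≤ (k:ℝ)*X + 1 := by
      have := mul_le_mul_of_nonneg_left hpow hk0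
      linarith
    have step2 : (k:ℝ)*X + 1 ≤ X * (2*((k:ℝ)+1)) := by nlinarith
    have step3 : ((c:ℝ)*(d:ℝ))^(C*L) ≤ C*L * ((c:ℝ)*(d:ℝ))^(C*L) := by
      nlinarith
    linarith

end MPaux

set_option maxHeartbeats 2000000 in
/-- **Lemma (weak error bound).** If `G` is a `(c,d)`-regular
`(⌊2k/(1+2ε)+1⌋, 1/2+ε)`-expander, there is a constant `C` depending only on `ε` such
that for some `t ≤ C(1+log(k+1))`,
`‖x - x̂^{2t}‖₁ ≤ C(1+log(k+1))·(cd)^{C(1+log(k+1))}·‖x - x⁽ᵏ⁾‖₁`. -/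
theorem weak_error_bound (ε : ℝ) (hε : 0 < ε) :
    ∃ C : ℝ, 0 < C ∧
      ∀ (n m c d k : ℕ), 0 < n → 0 < m → 0 < c → 0 < d → 0 < k →
        ∀ A : Fin m → Fin n → Bool,
          IsRegular A c d →
          IsExpander A c (Nat.floor (2 * (k : ℝ) / (1 + 2 * ε) + 1)) (1 / 2 + ε) →
          ∀ x xk : Fin n → ℝ, (∀ i, 0 ≤ x i) → BestKSparse k x xk →
            ∃ t : ℕ, (t : ℝ) ≤ C * (1 + Real.log ((k : ℝ) + 1)) ∧
              l1 (fun i => x i - xhat A x (2 * t) i) ≤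
                C * (1 + Real.log ((k : ℝ) + 1)) *
                  ((c : ℝ) * d) ^ (C * (1 + Real.log ((k : ℝ) + 1))) *
                  l1 (fun i => x i - xk i) := by
    classical
  -- constants depending only on ε
  set ε' : ℝ := min ε (1/4) with hε'def
  have hε'pos : 0 < ε' := lt_min hε (by norm_num)
  have hε'le : ε' ≤ 1/4 := min_le_right _ _
  have hε'ε : ε' ≤ ε := min_le_left _ _
  set s0 : ℕ := Nat.ceil (1/(2*ε')) with hs0def
  have hs0pos : 1 ≤ s0 := by
    have : (0:ℝ) < 1/(2*ε') := by positivity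
    have := Nat.ceil_pos.2 this
    omega
  refine ⟨4*(s0:ℝ)+8, by positivity, ?_⟩
  intro n m c d k hn hm hc hd hk A hreg hexp x xk hx hbest
  set C : ℝ := 4*(s0:ℝ)+8 with hCdef
  set L : ℝ := 1 + Real.log ((k:ℝ)+1) with hLdef
  have hlogk : 0 ≤ Real.log ((k:ℝ)+1) := Real.log_nonneg (by
    have : (0:ℝ) ≤ (k:ℝ) := Nat.cast_nonneg k
    linarith)
  have hL1 : 1 ≤ L := by rw [hLdef]; linarith
  set kk : ℕ := Nat.floor (2 * (k : ℝ) / (1 + 2 * ε) + 1) with hkkdef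
  have h2ε : (0:ℝ) < 1 + 2*ε := by linarith
  set u : ℝ := 2 * (k : ℝ) / (1 + 2 * ε) with hudef
  have hu0 : 0 ≤ u := by
    rw [hudef]
    positivity
  have hkk1 : 1 ≤ kk := by
    rw [hkkdef]
    exact Nat.le_floor (by push_cast; linarith)
  -- ε ≤ 1/2 from expansion of a singleton
  have hε2 : ε ≤ 1/2 := by
    have i0 : Fin n := ⟨0, hn⟩
    have hsing := hexp {i0} (by simpa using hkk1)
    have hGam : MP.Gam A {i0} = MP.nhdX A i0 := Finset.singleton_biUnion
    rw [hGam, hreg.1 i0] at hsing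
    have hc1 : (1:ℝ) ≤ (c:ℝ) := by exact_mod_cast hc
    simp only [Finset.card_singleton, Nat.cast_one, mul_one] at hsing
    nlinarith
  have hukk : u < (kk:ℝ) := by
    have h := Nat.lt_floor_add_one (u + 1)
    have : (kk:ℝ) = (Nat.floor (u+1) : ℝ) := by rw [hkkdef, hudef]
    rw [this]
    linarith
  have hku : (k:ℝ) ≤ u := by
    rw [hudef]
    rw [le_div_iff₀ h2ε]
    have : (0:ℝ) ≤ (k:ℝ) := Nat.cast_nonneg k
    nlinarith
  have hkkk : k ≤ kk := by
    have : (k:ℝ) < (kk:ℝ) := lt_of_le_of_lt hku hukk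
    exact_mod_cast le_of_lt (by exact_mod_cast this : k < kk)
  have hkgt : (k:ℝ) < (1/2+ε) * kk := by
    have hupos : (1/2+ε) * u = (k:ℝ) := by
      rw [hudef]
      field_simp
    nlinarith
  have hkk2 : kk ≤ 2*k+1 := by
    have h1 : u + 1 ≤ ((2*k+1 : ℕ):ℝ) := by
      push_cast
      rw [hudef]
      have : 2*(k:ℝ)/(1+2*ε) ≤ 2*(k:ℝ) := by
        rw [div_le_iff₀ h2ε]
        have : (0:ℝ) ≤ (k:ℝ) := Nat.cast_nonneg k
        nlinarith
      linarith
    have h2 := Nat.floor_le_floor h1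
    rw [Nat.floor_natCast] at h2
    rw [hkkdef]
    exact h2
  -- the tail error
  set r : ℝ := MP.l1 (fun i => x i - xk i) with hrdef
  have hr0 : 0 ≤ r := by
    rw [hrdef, MP.l1]
    exact Finset.sum_nonneg (fun i _ => abs_nonneg _)
  -- F0 is small
  set F0 : Finset (Fin n) := MPaux.Fset A x d r 0 with hF0def
  have hF0sub : F0 ⊆ Finset.univ.filter (fun i => xk i ≠ 0) := by
    intro i hi
    rw [hF0def, MPaux.Fset, Finset.mem_filter] at hi
    have hi' : MPaux.tau d r 0 < x i - xhat A x (2*0) i := hi.2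
    have hx0 : xhat A x (2*0) i = 0 := rfl
    have htau0 : MPaux.tau d r 0 = r := by
      rw [MPaux.tau]
      norm_num
    rw [hx0, htau0] at hi'
    rw [Finset.mem_filter]
    refine ⟨Finset.mem_univ _, ?_⟩
    intro hxk0
    have habs : |x i - xk i| = x i := by rw [hxk0]; simp [abs_of_nonneg (hx i)]
    have hle : |x i - xk i| ≤ r := by
      rw [hrdef, MP.l1]
      exact Finset.single_le_sum (f := fun l => |x l - xk l|)
        (fun l _ => abs_nonneg _) (Finset.mem_univ i)
    rw [habs] at hle
    linarith
  have hF0k : F0.card ≤ k :=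
    le_trans (Finset.card_le_card hF0sub) hbest.2.1
  -- the arena
  set W : Finset (Fin n) := MPaux.Warena A F0 with hWdef
  have hWkk : W.card ≤ kk :=
    MPaux.card_Warena_le A hexp hc F0 hreg hF0k hkkk hkgt
  -- the number of iterations
  set q : ℕ := Nat.log 2 kk + 1 with hqdef
  set tstar : ℕ := s0 * q with htstardef
  have htstar1 : 1 ≤ tstar := by
    rw [htstardef, hqdef]
    have hq1 : Nat.log 2 kk + 1 ≠ 0 := by omega
    exact Nat.one_le_iff_ne_zero.2 (Nat.mul_ne_zero (by omega) hq1)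
  -- decay of the peeled sets
  have hWt : ((MPaux.peel A W tstar).card : ℝ) ≤ (1-2*ε)^tstar * W.card :=
    MPaux.peel_card_decay A hreg hc hexp (by linarith) W hWkk tstar
  have hWempty : MPaux.peel A W tstar = ∅ := by
    have h1 : ((1:ℝ)-2*ε)^tstar ≤ (1-2*ε')^tstar :=
      pow_le_pow_left₀ (by linarith) (by linarith) _
    have h2 : ((1:ℝ)-2*ε')^tstar = ((1-2*ε')^s0)^q := by
      rw [htstardef, pow_mul]
    have h3 : ((1-2*ε')^s0 : ℝ)^q ≤ (1/2)^q := by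
      refine pow_le_pow_left₀ (pow_nonneg (by linarith) _) ?_ q
      rw [hs0def]
      exact MPaux.pow_s0_le_half ε' hε'pos hε'le
    have h4 : (kk:ℝ) < 2^q := by
      rw [hqdef]
      exact_mod_cast Nat.lt_pow_succ_log_self (by norm_num) kk
    have h5 : ((1:ℝ)/2)^q * kk < 1 := by
      rw [div_pow, one_pow]
      rw [div_mul_eq_mul_div, mul_comm]
      rw [div_lt_one (by positivity)]
      linarith
    have hWcast : ((W.card:ℕ):ℝ) ≤ (kk:ℝ) := by exact_mod_cast hWkk
    have hfin : ((MPaux.peel A W tstar).card : ℝ) < 1 := by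
      calc ((MPaux.peel A W tstar).card : ℝ) ≤ (1-2*ε)^tstar * W.card := hWt
      _ ≤ (1-2*ε')^tstar * kk := by
          apply mul_le_mul h1 hWcast (Nat.cast_nonneg _) (pow_nonneg (by linarith) _)
      _ = ((1-2*ε')^s0)^q * kk := by rw [← h2]
      _ ≤ (1/2)^q * kk := by
          apply mul_le_mul_of_nonneg_right h3 (Nat.cast_nonneg _)
      _ < 1 := h5
    have : (MPaux.peel A W tstar).card = 0 := by exact_mod_cast Nat.lt_one_iff.1 (by exact_mod_cast hfin)
    exact Finset.card_eq_zero.1 this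
  -- the bad set at time tstar is empty
  have hFsub : MPaux.Fset A x d r tstar ⊆ MPaux.peel A W tstar := by
    rw [hWdef, hF0def]
    exact (MPaux.exclusion A x hreg hd tstar).1 tstar le_rfl
  have hFempty : MPaux.Fset A x d r tstar = ∅ := by
    rw [← Finset.subset_empty]
    rw [← hWempty]
    exact hFsub
  have hbound : ∀ i, x i - xhat A x (2*tstar) i ≤ MPaux.tau d r tstar := by
    intro i
    by_contra hcon
    push_neg at hcon
    have : i ∈ MPaux.Fset A x d r tstar := by
      rw [MPaux.Fset, Finset.mem_filter]
      exact ⟨Finset.mem_univ _, hcon⟩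
    rw [hFempty] at this
    exact absurd this (Finset.notMem_empty i)
  have hsand := MPaux.sandwich A x hreg hc hx tstar
  have htau0 : 0 ≤ MPaux.tau d r tstar := by
    rw [MPaux.tau]
    have hd1 : (1:ℝ) ≤ (d:ℝ) := by exact_mod_cast hd
    have : (0:ℝ) ≤ ((d:ℝ)-1)^(2*tstar) := pow_nonneg (by linarith) _
    positivity
  -- the ℓ¹ error bound
  have hl1 : MP.l1 (fun i => x i - xhat A x (2*tstar) i)
      ≤ (k:ℝ) * MPaux.tau d r tstar + r := by
    have habs : MP.l1 (fun i => x i - xhat A x (2*tstar) i)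
        = ∑ i, (x i - xhat A x (2*tstar) i) := by
      rw [MP.l1]
      apply Finset.sum_congr rfl
      intro i _
      have := (hsand.1 i).2
      exact abs_of_nonneg (by linarith)
    rw [habs]
    rw [← Finset.sum_filter_add_sum_filter_not Finset.univ (fun i => xk i ≠ 0)]
    have hpart1 : ∑ i ∈ Finset.univ.filter (fun i => xk i ≠ 0),
        (x i - xhat A x (2*tstar) i) ≤ (k:ℝ) * MPaux.tau d r tstar := by
      calc ∑ i ∈ Finset.univ.filter (fun i => xk i ≠ 0), (x i - xhat A x (2*tstar) i)
          ≤ (Finset.univ.filter (fun i => xk i ≠ 0)).card • MPaux.tau d r tstar :=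
            Finset.sum_le_card_nsmul _ _ _ (fun i _ => hbound i)
      _ = ((Finset.univ.filter (fun i => xk i ≠ 0)).card : ℝ) * MPaux.tau d r tstar := by
            rw [nsmul_eq_mul]
      _ ≤ (k:ℝ) * MPaux.tau d r tstar := by
            apply mul_le_mul_of_nonneg_right _ htau0
            exact_mod_cast hbest.2.1
    have hpart2 : ∑ i ∈ Finset.univ.filter (fun i => ¬ xk i ≠ 0),
        (x i - xhat A x (2*tstar) i) ≤ r := by
      have hstep : ∑ i ∈ Finset.univ.filter (fun i => ¬ xk i ≠ 0),
          (x i - xhat A x (2*tstar) i)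
          ≤ ∑ i ∈ Finset.univ.filter (fun i => ¬ xk i ≠ 0), |x i - xk i| := by
        apply Finset.sum_le_sum
        intro i hi
        rw [Finset.mem_filter] at hi
        have hxk0 : xk i = 0 := by
          have := hi.2
          push_neg at this
          exact this
        have h1 := (hsand.1 i).1
        rw [hxk0]
        rw [abs_of_nonneg (by have := hx i; linarith : (0:ℝ) ≤ x i - 0)]
        linarith
      calc ∑ i ∈ Finset.univ.filter (fun i => ¬ xk i ≠ 0), (x i - xhat A x (2*tstar) i)
          ≤ ∑ i ∈ Finset.univ.filter (fun i => ¬ xk i ≠ 0), |x i - xk i| := hstep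
      _ ≤ ∑ i, |x i - xk i| :=
            Finset.sum_le_sum_of_subset_of_nonneg (Finset.filter_subset _ _)
              (fun i _ _ => abs_nonneg _)
      _ = r := by rw [hrdef, MP.l1]
    linarith
  -- numeric facts about tstar
  have hqL : (q:ℝ) ≤ 2*L := by
    rw [hqdef, hLdef]
    exact MPaux.q_bound k kk hkk1 hkk2
  have htstarL : (tstar:ℝ) ≤ (2*(s0:ℝ))*L := by
    rw [htstardef, Nat.cast_mul]
    have hs0' : (0:ℝ) ≤ (s0:ℝ) := Nat.cast_nonneg s0
    nlinarith [hqL, hs0']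
  refine ⟨tstar, ?_, ?_⟩
  · have : (2*(s0:ℝ))*L ≤ C*L := by
      rw [hCdef]
      have hs0' : (0:ℝ) ≤ (s0:ℝ) := Nat.cast_nonneg s0
      nlinarith
    linarith
  · have hnum : (k:ℝ) * ((d:ℝ)-1)^(2*tstar) + 1 ≤ C*L * ((c:ℝ)*(d:ℝ))^(C*L) := by
      apply MPaux.final_numeric hc hd htstar1 L C hL1
      · rw [hLdef]; linarith
      · rw [hCdef]
        have hs0' : (0:ℝ) ≤ (s0:ℝ) := Nat.cast_nonneg s0
        nlinarith
      · have hs0' : (0:ℝ) ≤ (s0:ℝ) := Nat.cast_nonneg s0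
        have : C*L = (4*(s0:ℝ)+8)*L := by rw [hCdef]
        rw [this]
        nlinarith [htstarL, hL1]
    have hfinal : (k:ℝ) * MPaux.tau d r tstar + r
        ≤ C*L * ((c:ℝ)*(d:ℝ))^(C*L) * r := by
      have : (k:ℝ) * MPaux.tau d r tstar + r
          = ((k:ℝ) * ((d:ℝ)-1)^(2*tstar) + 1) * r := by
        rw [MPaux.tau]
        ring
      rw [this]
      exact mul_le_mul_of_nonneg_right hnum hr0
    calc MP.l1 (fun i => x i - xhat A x (2*tstar) i)
        ≤ (k:ℝ) * MPaux.tau d r tstar + r := hl1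
    _ ≤ C*L * ((c:ℝ)*(d:ℝ))^(C*L) * r := hfinal
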